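/- The general conformal algebra gc_N: for a free ℂ[∂]-module M of rank N, the set of conformal endomorphisms (sequences A_{(n)} ∈ End_ℂ(M), n ∈ ℤ₊, with A_{(n)}v = 0 for n ≫ 0 and A_{(n)}∂v = ∂A_{(n)}v + nA_{(n-1)}v), equipped with (∂A)_{(n)} = -nA_{(n-1)} and products defined by (A_{(m)}B)_{(n)} = Σ_{j=0}^m (-1)^{m+j} C(m,j) [A_{(j)}, B_{(m+n-j)}], satisfies the conformal algebra axioms (C0)-(C3). -/

import Mathlib

open Finset

/- `M` is a `ℂ[∂]`-module: a ℂ-module together with the endomorphism `DM` by which `∂` acts.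
A conformal endomorphism of `M` is a sequence `A n ∈ End_ℂ(M)`, `n ∈ ℤ₊`, with `A n v = 0`
for `n ≫ 0` and `A n (∂v) = ∂(A n v) + n A (n-1) v`. -/

variable {M : Type*} [AddCommGroup M] [Module ℂ M]

/-- Conformal endomorphisms of the `ℂ[∂]`-module `(M, DM)`. -/
def IsConfEnd (DM : Module.End ℂ M) (A : ℕ → Module.End ℂ M) : Prop :=
  (∀ v : M, ∃ K : ℕ, ∀ n ≥ K, A n v = 0) ∧
  ∀ (n : ℕ) (v : M), A n (DM v) = DM (A n v) + (n : ℂ) • A (n - 1) v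

/-- The `m`-th product of conformal endomorphisms:
`(A_{(m)}B)_{(n)} = ∑_{j=0}^m (-1)^{m+j} C(m,j) [A_{(j)}, B_{(m+n-j)}]`. -/
noncomputable def cmul (A B : ℕ → Module.End ℂ M) (m : ℕ) : ℕ → Module.End ℂ M :=
  fun n => ∑ j ∈ range (m + 1), ((-1 : ℂ) ^ (m + j) * (m.choose j : ℂ)) •
    (A j * B (m + n - j) - B (m + n - j) * A j)

/-- The `ℂ[∂]`-module structure on conformal endomorphisms: `(∂A)_{(n)} = -n A_{(n-1)}`. -/
noncomputable def cD (A : ℕ → Module.End ℂ M) : ℕ → Module.End ℂ M :=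
  fun n => -(n : ℂ) • A (n - 1)

section Aux
open Polynomial

section binom
open Polynomial
lemma neg_one_pow_sub_c {a b : ℕ} (h : b ≤ a) : (-1:ℂ)^(a-b) = (-1)^(a+b) := by
  have : a + b = (a - b) + 2*b := by omega
  rw [this, pow_add, pow_mul]
  norm_num

lemma binom1 (n p i : ℕ) :
    ∑ j ∈ range (p+1), (-1:ℂ)^j * (p.choose j) * ((n+j).choose i)
      = (-1)^p * (if p ≤ i then ((n.choose (i-p) : ℕ) : ℂ) else 0) := by
  have h1 : ∑ j ∈ range (p+1), ((-1:ℂ)^j * (p.choose j)) • ((X+1:ℂ[X])^(n+j))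
      = ((-1:ℂ)^p) • ((X+1:ℂ[X])^n * X^p) := by
    have base := add_pow (-(X+1:ℂ[X])) 1 p
    have hneg : (-(X+1:ℂ[X]) + 1) = -X := by ring
    rw [hneg] at base
    calc ∑ j ∈ range (p+1), ((-1:ℂ)^j * (p.choose j)) • ((X+1:ℂ[X])^(n+j))
        = (X+1:ℂ[X])^n * ∑ j ∈ range (p+1), (-(X+1:ℂ[X]))^j * 1^(p-j) * ((p.choose j : ℕ) : ℂ[X]) := by
          rw [Finset.mul_sum]
          refine Finset.sum_congr rfl fun j hj => ?_
          rw [smul_eq_C_mul, pow_add, map_mul, map_pow, map_neg, map_one,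
            Polynomial.C_eq_natCast, one_pow,
            show (-(X+1):ℂ[X]) = (-1) * (X+1) from by ring, mul_pow]
          ring
      _ = (X+1:ℂ[X])^n * (-X)^p := by rw [← base]
      _ = ((-1:ℂ)^p) • ((X+1:ℂ[X])^n * X^p) := by
          rw [smul_eq_C_mul, map_pow, map_neg, map_one, neg_pow]
          ring
  have := congrArg (fun q : ℂ[X] => q.coeff i) h1
  simp only [finset_sum_coeff, coeff_smul, smul_eq_mul, coeff_mul_X_pow',
    coeff_X_add_one_pow] at this
  simpa using this

lemma binom2 (q n v : ℕ) :
    ∑ t ∈ range (q+1), (-1:ℂ)^t * (q.choose t) *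
      (if t ≤ v then (((q+n-t).choose (v-t) : ℕ) : ℂ) else 0) = (n.choose v : ℂ) := by
  have h1 : ∑ t ∈ range (q+1), ((-1:ℂ)^t * (q.choose t)) • ((X+1:ℂ[X])^(q+n-t) * X^t)
      = (X+1:ℂ[X])^n := by
    have base := add_pow (-(X:ℂ[X])) (X+1) q
    have hneg : (-(X:ℂ[X]) + (X+1)) = 1 := by ring
    rw [hneg, one_pow] at base
    calc ∑ t ∈ range (q+1), ((-1:ℂ)^t * (q.choose t)) • ((X+1:ℂ[X])^(q+n-t) * X^t)
        = (X+1:ℂ[X])^n * ∑ t ∈ range (q+1), (-(X:ℂ[X]))^t * (X+1)^(q-t) * ((q.choose t : ℕ) : ℂ[X]) := by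
          rw [Finset.mul_sum]
          refine Finset.sum_congr rfl fun t ht => ?_
          have htq : t ≤ q := by simpa [Nat.lt_succ_iff] using ht
          have he : q + n - t = (q - t) + n := by omega
          rw [he, smul_eq_C_mul, pow_add, map_mul, map_pow, map_neg, map_one,
            Polynomial.C_eq_natCast, neg_pow]
          ring
      _ = (X+1:ℂ[X])^n := by rw [← base, mul_one]
  have := congrArg (fun r : ℂ[X] => r.coeff v) h1
  simp only [finset_sum_coeff, coeff_smul, smul_eq_mul, coeff_mul_X_pow',
    coeff_X_add_one_pow] at this
  rw [← this]

end binom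

-- bracket
def br (x y : Module.End ℂ M) : Module.End ℂ M := x * y - y * x

lemma br_apply (x y : Module.End ℂ M) (v : M) : br x y v = x (y v) - y (x v) := rfl

lemma br_jacobi (x y z : Module.End ℂ M) :
    br x (br y z) - br y (br x z) = br (br x y) z := by
  simp only [br]; noncomm_ring

lemma br_smul_left (c : ℂ) (x y : Module.End ℂ M) : br (c • x) y = c • br x y := by
  simp only [br, smul_mul_assoc, mul_smul_comm, smul_sub]

lemma br_smul_right (c : ℂ) (x y : Module.End ℂ M) : br x (c • y) = c • br x y := by
  simp only [br, smul_mul_assoc, mul_smul_comm, smul_sub]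

lemma br_sum_right {s : Finset ℕ} (x : Module.End ℂ M) (f : ℕ → Module.End ℂ M) :
    br x (∑ i ∈ s, f i) = ∑ i ∈ s, br x (f i) := by
  simp only [br, Finset.mul_sum, Finset.sum_mul, ← Finset.sum_sub_distrib]

lemma br_skew (x y : Module.End ℂ M) : br x y = - br y x := by simp [br]

lemma cmul_apply (A B : ℕ → Module.End ℂ M) (m n : ℕ) :
    cmul A B m n = ∑ j ∈ range (m + 1),
      ((-1 : ℂ) ^ (m + j) * (m.choose j : ℂ)) • br (A j) (B (m + n - j)) := rfl

variable (DM : Module.End ℂ M)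

lemma part1 (A : ℕ → Module.End ℂ M) (hA : IsConfEnd DM A) : IsConfEnd DM (cD A) := by
  constructor
  · intro v
    obtain ⟨K, hK⟩ := hA.1 v
    exact ⟨K + 1, fun n hn => by
      simp [cD, hK (n-1) (by omega), smul_zero]⟩
  · rintro (_ | n) v
    · simp [cD]
    · have := hA.2 n v
      simp only [cD, LinearMap.smul_apply, map_smul, Nat.add_sub_cancel, this]
      push_cast
      module

-- the per-term DM rule
lemma br_term_D (A B : ℕ → Module.End ℂ M) (hA : IsConfEnd DM A) (hB : IsConfEnd DM B)
    (j k : ℕ) (v : M) :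
    br (A j) (B k) (DM v) = DM (br (A j) (B k) v)
      + (j : ℂ) • br (A (j-1)) (B k) v + (k : ℂ) • br (A j) (B (k-1)) v := by
  simp only [br_apply, map_sub, map_smul, smul_sub, hA.2, hB.2, map_add]
  abel

example : True := trivial

lemma scal_shift (m n j : ℕ) (hj : j < m) :
    (-1:ℂ)^(m+(j+1)) * (m.choose (j+1)) * (j+1)
      + (-1)^(m+j) * (m.choose j) * ((m+n-j : ℕ) : ℂ)
      = (n:ℂ) * ((-1)^(m+j) * (m.choose j)) := by
  have h0 := Nat.choose_succ_right_eq m j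
  have h1 : ((m.choose (j+1) : ℕ) : ℂ) * ((j:ℂ)+1) = (m.choose j : ℂ) * (((m - j : ℕ)) : ℂ) := by
    exact_mod_cast congrArg (fun t : ℕ => (t : ℂ)) h0
  rw [Nat.cast_sub hj.le] at h1
  rw [Nat.cast_sub (by omega : j ≤ m + n), Nat.cast_add]
  rw [show m + (j+1) = (m+j)+1 by omega, pow_succ]
  linear_combination (-(-1:ℂ)^(m+j)) * h1

lemma part2rule (A B : ℕ → Module.End ℂ M) (hA : IsConfEnd DM A) (hB : IsConfEnd DM B)
    (m n : ℕ) (v : M) :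
    cmul A B m n (DM v) = DM (cmul A B m n v)
      + (n:ℂ) • ∑ j ∈ range (m+1),
          ((-1:ℂ)^(m+j) * (m.choose j : ℂ)) • br (A j) (B (m+n-j-1)) v := by
  have expand : cmul A B m n (DM v)
      = (∑ j ∈ range (m+1), ((-1:ℂ)^(m+j) * (m.choose j : ℂ)) • DM (br (A j) (B (m+n-j)) v))
      + ((∑ j ∈ range (m+1), ((-1:ℂ)^(m+j) * (m.choose j : ℂ)) •
            ((j:ℂ) • br (A (j-1)) (B (m+n-j)) v))
        + (∑ j ∈ range (m+1), ((-1:ℂ)^(m+j) * (m.choose j : ℂ)) •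
            (((m+n-j : ℕ):ℂ) • br (A j) (B (m+n-j-1)) v))) := by
    rw [cmul_apply, LinearMap.sum_apply, ← Finset.sum_add_distrib, ← Finset.sum_add_distrib]
    refine Finset.sum_congr rfl fun j hj => ?_
    rw [LinearMap.smul_apply, br_term_D DM A B hA hB, smul_add, smul_add, add_assoc]
  rw [expand]
  congr 1
  · rw [cmul_apply, LinearMap.sum_apply, map_sum]
    refine Finset.sum_congr rfl fun j hj => ?_
    rw [LinearMap.smul_apply, map_smul]
  · -- the combinatorial shift
    rw [Finset.smul_sum]
    rw [Finset.sum_range_succ' _ m, Finset.sum_range_succ _ m, Finset.sum_range_succ _ m]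
    simp only [Nat.cast_zero, zero_smul, smul_zero, add_zero]
    rw [← add_assoc, ← Finset.sum_add_distrib]
    congr 1
    · refine Finset.sum_congr rfl fun j hj => ?_
      have hjm : j < m := Finset.mem_range.mp hj
      rw [show m + n - (j+1) = m + n - j - 1 by omega, show j + 1 - 1 = j by omega]
      rw [smul_smul, smul_smul, smul_smul, ← add_smul]
      congr 1
      have hs := scal_shift m n j hjm
      push_cast at hs ⊢
      linear_combination hs
    · rw [Nat.add_sub_cancel_left, smul_smul, smul_smul]
      congr 1
      ring

lemma part2 (A B : ℕ → Module.End ℂ M) (hA : IsConfEnd DM A) (hB : IsConfEnd DM B)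
    (m : ℕ) : IsConfEnd DM (cmul A B m) := by
  constructor
  · intro v
    choose KB hKB using hB.1
    refine ⟨((range (m+1)).sup fun j => KB (A j v)) ⊔ KB v, fun n hn => ?_⟩
    rw [cmul_apply, LinearMap.sum_apply]
    refine Finset.sum_eq_zero fun j hj => ?_
    have hjm : j ≤ m := by simpa [Nat.lt_succ_iff] using hj
    have hsup : KB v ≤ n := le_trans le_sup_right hn
    have h1 : B (m+n-j) v = 0 := hKB v _ (by omega)
    have h2 : B (m+n-j) (A j v) = 0 := by
      refine hKB (A j v) _ ?_
      have : KB (A j v) ≤ (range (m+1)).sup fun j => KB (A j v) :=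
        Finset.le_sup (f := fun j => KB (A j v)) hj
      have : KB (A j v) ≤ n := le_trans (le_trans this le_sup_left) hn
      omega
    rw [LinearMap.smul_apply, br_apply, h1, map_zero, h2]
    simp
  · intro n v
    rcases n with _ | n'
    · have h := part2rule DM A B hA hB m 0 v
      simpa using h
    · have h := part2rule DM A B hA hB m (n'+1) v
      rw [h]
      congr 2
      · rw [cmul_apply, LinearMap.sum_apply]
        refine Finset.sum_congr rfl fun j hj => ?_
        rw [show m + (n'+1) - j - 1 = m + (n'+1-1) - j by omega]
        rfl

-- per-vector locality in the m-direction
lemma locm (A B : ℕ → Module.End ℂ M) (hA : IsConfEnd DM A) (hB : IsConfEnd DM B)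
    (v : M) : ∃ K : ℕ, ∀ m ≥ K, ∀ n : ℕ, cmul A B m n v = 0 := by
  choose KA hKA using hA.1
  choose KB hKB using hB.1
  obtain ⟨P, hPv, hPB⟩ : ∃ P : ℕ, KA v ≤ P ∧ ∀ k < KB v, KA (B k v) ≤ P :=
    ⟨KA v ⊔ ((range (KB v)).sup fun k => KA (B k v)), le_sup_left,
      fun k hk => le_trans (Finset.le_sup (f := fun k => KA (B k v))
        (Finset.mem_range.mpr hk)) le_sup_right⟩
  obtain ⟨Q, hQv, hQA⟩ : ∃ Q : ℕ, KB v ≤ Q ∧ ∀ j < P, KB (A j v) ≤ Q :=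
    ⟨KB v ⊔ ((range P).sup fun j => KB (A j v)), le_sup_left,
      fun j hj => le_trans (Finset.le_sup (f := fun j => KB (A j v))
        (Finset.mem_range.mpr hj)) le_sup_right⟩
  refine ⟨P + Q, fun m hm n => ?_⟩
  rw [cmul_apply, LinearMap.sum_apply]
  refine Finset.sum_eq_zero fun j hj => ?_
  have hjm : j ≤ m := by simpa [Nat.lt_succ_iff] using hj
  rw [LinearMap.smul_apply, br_apply]
  rcases le_or_gt P j with hPj | hjP
  · have hAv : A j v = 0 := hKA v j (le_trans hPv hPj)
    have hfirst : A j (B (m+n-j) v) = 0 := by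
      rcases le_or_gt (KB v) (m+n-j) with hk | hk
      · rw [hKB v _ hk, map_zero]
      · exact hKA (B (m+n-j) v) j (le_trans (hPB _ hk) hPj)
    rw [hAv, map_zero, hfirst]
    simp
  · have hge : Q ≤ m + n - j := by omega
    have h1 : B (m+n-j) v = 0 := hKB v _ (le_trans hQv hge)
    have h2 : B (m+n-j) (A j v) = 0 := hKB (A j v) _ (le_trans (hQA _ hjP) hge)
    rw [h1, map_zero, h2]
    simp

lemma part3 {N : ℕ} (bv : Fin N → M)
    (hspan : ∀ v : M, v ∈ Submodule.span ℂ {x | ∃ (i : Fin N) (k : ℕ), x = (⇑DM)^[k] (bv i)})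
    (A B : ℕ → Module.End ℂ M) (hA : IsConfEnd DM A) (hB : IsConfEnd DM B) :
    ∃ K : ℕ, ∀ m ≥ K, cmul A B m = 0 := by
  choose Ki hKi using fun i => locm DM A B hA hB (bv i)
  refine ⟨Finset.univ.sup Ki, fun m hm => ?_⟩
  have gen : ∀ (k : ℕ) (i : Fin N) (n : ℕ), cmul A B m n ((⇑DM)^[k] (bv i)) = 0 := by
    intro k
    induction k with
    | zero =>
      intro i n
      exact hKi i m (le_trans (Finset.le_sup (f := Ki) (Finset.mem_univ i)) hm) n
    | succ k ih =>
      intro i n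
      rw [Function.iterate_succ_apply', (part2 DM A B hA hB m).2 n _, ih i n, ih i (n-1)]
      simp
  have main : ∀ v : M, ∀ n, cmul A B m n v = 0 := by
    intro v
    have hv := hspan v
    induction hv using Submodule.span_induction with
    | mem x hx =>
      obtain ⟨i, k, rfl⟩ := hx
      exact gen k i
    | zero => intro n; simp
    | add x y hx hy ihx ihy => intro n; rw [map_add, ihx n, ihy n, add_zero]
    | smul a x hx ihx => intro n; rw [map_smul, ihx n, smul_zero]
  funext n
  exact LinearMap.ext fun v => main v n

lemma part4 (A B : ℕ → Module.End ℂ M) (m : ℕ) :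
    cmul (cD A) B m = fun n => -(m : ℂ) • cmul A B (m - 1) n := by
  funext n
  rcases m with _ | m'
  · simp [cmul, cD]
  · rw [Nat.add_sub_cancel, cmul_apply, Finset.sum_range_succ']
    have h0 : ((-1:ℂ)^(m'+1+0) * (((m'+1).choose 0 : ℕ) : ℂ)) • br (cD A 0) (B (m'+1+n-0)) = 0 := by
      simp [cD, br]
    rw [h0, add_zero, cmul_apply, Finset.smul_sum]
    refine Finset.sum_congr rfl fun i hi => ?_
    have him : i ≤ m' := by simpa [Nat.lt_succ_iff] using hi
    simp only [cD]
    rw [br_smul_left, smul_smul, smul_smul]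
    rw [show m'+1+n-(i+1) = m'+n-i by omega, show i+1-1 = i by omega]
    congr 1
    have hc := Nat.add_one_mul_choose_eq m' i
    have hc' : ((m':ℂ)+1) * ((m'.choose i : ℕ) : ℂ)
        = (((m'+1).choose (i+1) : ℕ) : ℂ) * ((i:ℂ)+1) := by exact_mod_cast hc
    rw [show m'+1+(i+1) = (m'+i)+2 by omega, pow_add]
    push_cast
    linear_combination ((-1:ℂ)^(m'+i)) * hc'

lemma cD_iter (X : ℕ → Module.End ℂ M) (j : ℕ) : ∀ p : ℕ,
    (cD^[j] X) p = ((-1:ℂ)^j * ((j.factorial : ℂ) * (p.choose j : ℂ))) • X (p - j) := by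
  induction j with
  | zero => intro p; simp
  | succ j ih =>
    intro p
    rw [Function.iterate_succ_apply']
    show -(p:ℂ) • (cD^[j] X) (p-1) = _
    rw [ih (p-1)]
    rcases Nat.eq_zero_or_pos p with h0 | hp
    · subst h0; simp
    · rw [show p - 1 - j = p - (j+1) by omega, smul_smul]
      congr 1
      have hc := Nat.add_one_mul_choose_eq (p-1) j
      rw [show p - 1 + 1 = p by omega] at hc
      have hc' : (p:ℂ) * ((p-1).choose j : ℕ) = ((p.choose (j+1) : ℕ) : ℂ) * ((j:ℂ)+1) := by
        exact_mod_cast hc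
      push_cast [Nat.factorial_succ]
      push_cast at hc'
      rw [pow_succ]
      linear_combination ((-1:ℂ)^j * (-1) * (j.factorial : ℂ)) * hc'

lemma part5 (A B : ℕ → Module.End ℂ M) (n K : ℕ)
    (h : ∀ j ≥ K, cmul B A (n + j) = 0) :
    cmul A B n = fun p => ∑ j ∈ range K,
      (((-1 : ℂ) ^ (j + n + 1) * ((j.factorial : ℂ))⁻¹)) • (cD^[j] (cmul B A (n + j))) p := by
  funext p
  have hterm : ∀ j, ((-1:ℂ)^(j+n+1) * ((j.factorial : ℂ))⁻¹) • (cD^[j] (cmul B A (n+j))) p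
      = ((-1:ℂ)^(n+1) * (p.choose j : ℂ)) • cmul B A (n+j) (p-j) := by
    intro j
    rw [cD_iter, smul_smul]
    congr 1
    have hf : (j.factorial : ℂ) ≠ 0 := Nat.cast_ne_zero.mpr (Nat.factorial_ne_zero j)
    have h2 : (-1:ℂ)^(j+n+1) * (-1)^j = (-1)^(n+1) := by
      rw [← pow_add, show j+n+1+j = 2*j + (n+1) by omega, pow_add, pow_mul]
      norm_num
    calc (-1:ℂ)^(j+n+1) * (↑j.factorial)⁻¹ * ((-1)^j * (↑j.factorial * ↑(p.choose j)))
        = ((-1:ℂ)^(j+n+1) * (-1)^j) * ((↑j.factorial)⁻¹ * ↑j.factorial) * ↑(p.choose j) := by ring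
      _ = (-1:ℂ)^(n+1) * ↑(p.choose j) := by rw [h2, inv_mul_cancel₀ hf, mul_one]
  rw [Finset.sum_congr rfl fun j _ => hterm j]
  have hgK : ∀ j, K ≤ j → ((-1:ℂ)^(n+1) * (p.choose j : ℂ)) • cmul B A (n+j) (p-j) = 0 := by
    intro j hj
    rw [h j hj]
    simp
  have hgp : ∀ j, p < j → ((-1:ℂ)^(n+1) * (p.choose j : ℂ)) • cmul B A (n+j) (p-j) = 0 := by
    intro j hj
    rw [Nat.choose_eq_zero_of_lt hj]
    simp
  have e1 := Finset.sum_subset (Finset.range_subset_range.mpr (le_max_left K (p+1)))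
    (f := fun j => ((-1:ℂ)^(n+1) * (p.choose j : ℂ)) • cmul B A (n+j) (p-j))
    (fun x _ hx2 => hgK x (by have := Finset.mem_range.not.mp hx2; omega))
  have e2 := Finset.sum_subset (Finset.range_subset_range.mpr (le_max_right K (p+1)))
    (f := fun j => ((-1:ℂ)^(n+1) * (p.choose j : ℂ)) • cmul B A (n+j) (p-j))
    (fun x _ hx2 => hgp x (by have := Finset.mem_range.not.mp hx2; omega))
  rw [e1.trans e2.symm]
  -- expand and swap
  have hexp : ∀ j ∈ range (p+1),
      ((-1:ℂ)^(n+1) * (p.choose j : ℂ)) • cmul B A (n+j) (p-j)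
      = ∑ i ∈ range (n+p+1),
        ((-1:ℂ)^(n+1) * (p.choose j : ℂ) * ((-1:ℂ)^((n+j)+i) * ((n+j).choose i : ℂ))) •
          br (B i) (A (n+p-i)) := by
    intro j hj
    have hjp : j ≤ p := by simpa [Nat.lt_succ_iff] using hj
    rw [cmul_apply, Finset.smul_sum]
    rw [Finset.sum_subset (Finset.range_subset_range.mpr (by omega : n+j+1 ≤ n+p+1))]
    · refine Finset.sum_congr rfl fun i hi => ?_
      rw [smul_smul, show (n+j) + (p-j) - i = n+p-i by omega]
    · intro x _ hx
      have hx2 : n + j < x := by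
        have := Finset.mem_range.not.mp hx
        omega
      rw [Nat.choose_eq_zero_of_lt hx2]
      simp
  rw [Finset.sum_congr rfl hexp, Finset.sum_comm]
  have hinner : ∀ i ∈ range (n+p+1),
      (∑ j ∈ range (p+1), ((-1:ℂ)^(n+1) * (p.choose j : ℂ) * ((-1:ℂ)^((n+j)+i) * ((n+j).choose i : ℂ))) •
        br (B i) (A (n+p-i)))
      = (((-1:ℂ)^(i+p+1)) * (if p ≤ i then ((n.choose (i-p) : ℕ) : ℂ) else 0)) •
          br (B i) (A (n+p-i)) := by
    intro i _
    rw [← Finset.sum_smul]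
    congr 1
    calc ∑ j ∈ range (p+1), (-1:ℂ)^(n+1) * (p.choose j : ℂ) * ((-1:ℂ)^((n+j)+i) * ((n+j).choose i : ℂ))
        = ((-1:ℂ)^(n+1) * (-1)^(n+i)) * ∑ j ∈ range (p+1), (-1:ℂ)^j * (p.choose j) * ((n+j).choose i) := by
          rw [Finset.mul_sum]
          refine Finset.sum_congr rfl fun j _ => ?_
          rw [show (n+j)+i = (n+i)+j by omega, pow_add]
          ring
      _ = ((-1:ℂ)^(n+1) * (-1)^(n+i)) * ((-1)^p * (if p ≤ i then ((n.choose (i-p) : ℕ) : ℂ) else 0)) := by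
          rw [binom1]
      _ = ((-1:ℂ)^(i+p+1)) * (if p ≤ i then ((n.choose (i-p) : ℕ) : ℂ) else 0) := by
          rw [← mul_assoc, ← pow_add, ← pow_add, show n+1+(n+i)+p = 2*n + (i+p+1) by omega,
            pow_add, pow_mul]
          norm_num
  rw [Finset.sum_congr rfl hinner]
  -- restrict to i ≥ p
  have hres : ∑ i ∈ range (n+p+1),
      (((-1:ℂ)^(i+p+1)) * (if p ≤ i then ((n.choose (i-p) : ℕ) : ℂ) else 0)) • br (B i) (A (n+p-i))
      = ∑ i ∈ Finset.Ico p (n+p+1),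
      (((-1:ℂ)^(i+p+1)) * (if p ≤ i then ((n.choose (i-p) : ℕ) : ℂ) else 0)) • br (B i) (A (n+p-i)) := by
    refine (Finset.sum_subset ?_ ?_).symm
    · intro x hx
      rw [Finset.mem_range]
      exact (Finset.mem_Ico.mp hx).2
    · intro x hx hx2
      have hxp : ¬ p ≤ x := by
        intro hc
        exact hx2 (Finset.mem_Ico.mpr ⟨hc, Finset.mem_range.mp hx⟩)
      rw [if_neg hxp]
      simp
  rw [hres, Finset.sum_Ico_eq_sum_range, show n+p+1-p = n+1 by omega]
  rw [cmul_apply, ← Finset.sum_range_reflect]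
  refine Finset.sum_congr rfl fun t ht => ?_
  have htn : t ≤ n := by simpa [Nat.lt_succ_iff] using ht
  rw [show n+1-1-t = n-t by omega, show n+p-(n-t) = p+t by omega,
    show n+p-(p+t) = n-t by omega, if_pos (by omega : p ≤ p + t),
    show p+t-p = t by omega, Nat.choose_symm htn]
  rw [br_skew (B (p+t)) (A (n-t)), smul_neg, ← neg_smul]
  congr 1
  have e3 : (-1:ℂ)^(n+(n-t)) = (-1)^t := by
    rw [show n+(n-t) = 2*(n-t) + t by omega, pow_add, pow_mul]
    norm_num
  have e4 : (-1:ℂ)^(p+t+(p+1)) = -(-1)^t := by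
    rw [show p+t+(p+1) = 2*p + t + 1 by omega, pow_succ, pow_add, pow_mul]
    norm_num
  rw [e3]
  rw [show p+t+p+1 = p+t+(p+1) by omega, e4]
  ring

lemma br_sum_left {s : Finset ℕ} (f : ℕ → Module.End ℂ M) (x : Module.End ℂ M) :
    br (∑ i ∈ s, f i) x = ∑ i ∈ s, br (f i) x := by
  simp only [br, Finset.sum_mul, Finset.mul_sum, ← Finset.sum_sub_distrib]

lemma neg_one_pow_congr_c {a b : ℕ} (h : a % 2 = b % 2) : (-1:ℂ)^a = (-1)^b := by
  rw [← Nat.div_add_mod a 2, ← Nat.div_add_mod b 2, h, pow_add, pow_add, pow_mul, pow_mul]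
  norm_num

/-- scalar coefficient in the triple sum of (C3) -/
noncomputable def Gs (m n u v j : ℕ) : ℂ :=
  (-1:ℂ)^(m+n+j+v) * (m.choose j) * (j.choose u) *
    (if j ≤ u+v then (((m+n-j).choose (u+v-j) : ℕ) : ℂ) else 0)

lemma binom3 (m n u v : ℕ) (hu : u ≤ m) :
    ∑ j ∈ range (m+1), Gs m n u v j
      = (-1:ℂ)^(m+n+u+v) * (m.choose u) * (n.choose v) := by
  have hsub : Finset.Ico u (m+1) ⊆ range (m+1) := by
    intro x hx
    rw [Finset.mem_range]
    exact (Finset.mem_Ico.mp hx).2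
  have hvan : ∀ j ∈ range (m+1), j ∉ Finset.Ico u (m+1) → Gs m n u v j = 0 := by
    intro j hj hj2
    have hju : j < u := by
      have h1 := Finset.mem_range.mp hj
      rcases lt_or_ge j u with h | h
      · exact h
      · exact absurd (Finset.mem_Ico.mpr ⟨h, h1⟩) hj2
    rw [Gs, Nat.choose_eq_zero_of_lt hju]
    simp
  rw [← Finset.sum_subset hsub hvan, Finset.sum_Ico_eq_sum_range,
    show m+1-u = (m-u)+1 by omega]
  have hstep : ∀ t ∈ range ((m-u)+1), Gs m n u v (u+t)
      = ((-1:ℂ)^(m+n+u+v) * (m.choose u)) *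
        ((-1:ℂ)^t * ((m-u).choose t) *
          (if t ≤ v then ((((m-u)+n-t).choose (v-t) : ℕ) : ℂ) else 0)) := by
    intro t ht
    have htm : t ≤ m - u := by simpa [Nat.lt_succ_iff] using ht
    have hc := Nat.choose_mul (n := m) (k := u+t) (show u ≤ u+t by omega)
    have hc' : ((m.choose (u+t) : ℕ) : ℂ) * ((u+t).choose u : ℕ)
        = ((m.choose u : ℕ) : ℂ) * ((m-u).choose ((u+t)-u) : ℕ) := by exact_mod_cast hc
    rw [show (u+t)-u = t by omega] at hc'
    rw [Gs]
    rw [if_congr (by omega : u+t ≤ u+v ↔ t ≤ v)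
      (by rw [show u+v-(u+t) = v-t by omega, show m+n-(u+t) = (m-u)+n-t by omega]) rfl]
    rw [show m+n+(u+t)+v = (m+n+u+v)+t by omega, pow_add]
    linear_combination ((-1:ℂ)^(m+n+u+v) * (-1:ℂ)^t *
      (if t ≤ v then ((((m-u)+n-t).choose (v-t) : ℕ) : ℂ) else 0)) * hc'
  rw [Finset.sum_congr rfl hstep, ← Finset.mul_sum, binom2 (m-u) n v, mul_assoc]

lemma part6 (A B C : ℕ → Module.End ℂ M) (m n : ℕ) :
    cmul A (cmul B C n) m = fun p => (∑ j ∈ range (m + 1), (m.choose j : ℂ) •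
      cmul (cmul A B j) C (m + n - j) p) + cmul B (cmul A C m) n p := by
  funext p
  have hL : cmul A (cmul B C n) m p
      = ∑ u ∈ range (m+1), ∑ v ∈ range (n+1),
          (((-1:ℂ)^(m+u) * (m.choose u : ℂ)) * ((-1:ℂ)^(n+v) * (n.choose v : ℂ))) •
            br (A u) (br (B v) (C (m+n+p-(u+v)))) := by
    rw [cmul_apply]
    refine Finset.sum_congr rfl fun u hu => ?_
    have hum : u ≤ m := by simpa [Nat.lt_succ_iff] using hu
    rw [cmul_apply, br_sum_right, Finset.smul_sum]
    refine Finset.sum_congr rfl fun v hv => ?_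
    have hvn : v ≤ n := by simpa [Nat.lt_succ_iff] using hv
    rw [br_smul_right, smul_smul, show n+(m+p-u)-v = m+n+p-(u+v) by omega]
  have hR : cmul B (cmul A C m) n p
      = ∑ u ∈ range (m+1), ∑ v ∈ range (n+1),
          (((-1:ℂ)^(m+u) * (m.choose u : ℂ)) * ((-1:ℂ)^(n+v) * (n.choose v : ℂ))) •
            br (B v) (br (A u) (C (m+n+p-(u+v)))) := by
    rw [show (∑ u ∈ range (m+1), ∑ v ∈ range (n+1),
          (((-1:ℂ)^(m+u) * (m.choose u : ℂ)) * ((-1:ℂ)^(n+v) * (n.choose v : ℂ))) •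
            br (B v) (br (A u) (C (m+n+p-(u+v)))))
        = ∑ v ∈ range (n+1), ∑ u ∈ range (m+1),
          (((-1:ℂ)^(m+u) * (m.choose u : ℂ)) * ((-1:ℂ)^(n+v) * (n.choose v : ℂ))) •
            br (B v) (br (A u) (C (m+n+p-(u+v)))) from Finset.sum_comm]
    rw [cmul_apply]
    refine Finset.sum_congr rfl fun v hv => ?_
    have hvn : v ≤ n := by simpa [Nat.lt_succ_iff] using hv
    rw [cmul_apply, br_sum_right, Finset.smul_sum]
    refine Finset.sum_congr rfl fun u hu => ?_
    have hum : u ≤ m := by simpa [Nat.lt_succ_iff] using hu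
    rw [br_smul_right, smul_smul, show m+(n+p-v)-u = m+n+p-(u+v) by omega]
    congr 1
    ring
  have hD : cmul A (cmul B C n) m p - cmul B (cmul A C m) n p
      = ∑ u ∈ range (m+1), ∑ v ∈ range (n+1),
          (((-1:ℂ)^(m+u) * (m.choose u : ℂ)) * ((-1:ℂ)^(n+v) * (n.choose v : ℂ))) •
            br (br (A u) (B v)) (C (m+n+p-(u+v))) := by
    rw [hL, hR, ← Finset.sum_sub_distrib]
    refine Finset.sum_congr rfl fun u _ => ?_
    rw [← Finset.sum_sub_distrib]
    refine Finset.sum_congr rfl fun v _ => ?_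
    rw [← smul_sub, br_jacobi]
  have claim2 : ∑ j ∈ range (m + 1), (m.choose j : ℂ) • cmul (cmul A B j) C (m + n - j) p
      = ∑ u ∈ range (m+1), ∑ v ∈ range (n+1),
          (((-1:ℂ)^(m+u) * (m.choose u : ℂ)) * ((-1:ℂ)^(n+v) * (n.choose v : ℂ))) •
            br (br (A u) (B v)) (C (m+n+p-(u+v))) := by
    calc ∑ j ∈ range (m + 1), (m.choose j : ℂ) • cmul (cmul A B j) C (m + n - j) p
        = ∑ j ∈ range (m+1), ∑ u ∈ range (j+1), ∑ k ∈ range ((m+n-j)+1),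
            ((m.choose j : ℂ) * ((-1:ℂ)^((m+n-j)+k) * ((m+n-j).choose k : ℂ)) *
              ((-1:ℂ)^(j+u) * (j.choose u : ℂ))) •
              br (br (A u) (B (j+k-u))) (C ((m+n-j)+p-k)) := by
          refine Finset.sum_congr rfl fun j hj => ?_
          rw [cmul_apply, Finset.smul_sum]
          refine (Finset.sum_congr rfl fun k hk => ?_).trans Finset.sum_comm
          rw [cmul_apply, br_sum_left, Finset.smul_sum, Finset.smul_sum]
          refine Finset.sum_congr rfl fun u hu => ?_
          rw [br_smul_left, smul_smul, smul_smul]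
      _ = ∑ j ∈ range (m+1), ∑ u ∈ range (j+1), ∑ v ∈ range (m+n+1),
            Gs m n u v j • br (br (A u) (B v)) (C (m+n+p-(u+v))) := by
          refine Finset.sum_congr rfl fun j hj => ?_
          have hjm : j ≤ m := by simpa [Nat.lt_succ_iff] using hj
          refine Finset.sum_congr rfl fun u hu => ?_
          have huj : u ≤ j := by simpa [Nat.lt_succ_iff] using hu
          have hsub : Finset.Ico (j-u) (m+n-u+1) ⊆ range (m+n+1) := by
            intro x hx
            rw [Finset.mem_range]
            have := (Finset.mem_Ico.mp hx).2
            omega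
          have hvan : ∀ v ∈ range (m+n+1), v ∉ Finset.Ico (j-u) (m+n-u+1) →
              Gs m n u v j • br (br (A u) (B v)) (C (m+n+p-(u+v))) = 0 := by
            intro v hv hv2
            rcases lt_or_ge v (j-u) with hlt | hge
            · rw [Gs, if_neg (by omega)]
              simp
            · have hbig : m+n-u+1 ≤ v := by
                by_contra hc
                exact hv2 (Finset.mem_Ico.mpr ⟨hge, by omega⟩)
              rw [Gs, if_pos (show j ≤ u+v by omega),
                Nat.choose_eq_zero_of_lt (show m+n-j < u+v-j by omega)]
              simp
          symm
          calc ∑ v ∈ range (m+n+1), Gs m n u v j • br (br (A u) (B v)) (C (m+n+p-(u+v)))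
              = ∑ v ∈ Finset.Ico (j-u) (m+n-u+1),
                  Gs m n u v j • br (br (A u) (B v)) (C (m+n+p-(u+v))) :=
                (Finset.sum_subset hsub hvan).symm
            _ = ∑ k ∈ range ((m+n-j)+1),
                  Gs m n u ((j-u)+k) j •
                    br (br (A u) (B ((j-u)+k))) (C (m+n+p-(u+((j-u)+k)))) := by
                rw [Finset.sum_Ico_eq_sum_range, show m+n-u+1-(j-u) = (m+n-j)+1 by omega]
            _ = ∑ k ∈ range ((m+n-j)+1),
                  ((m.choose j : ℂ) * ((-1:ℂ)^((m+n-j)+k) * ((m+n-j).choose k : ℂ)) *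
                    ((-1:ℂ)^(j+u) * (j.choose u : ℂ))) •
                    br (br (A u) (B (j+k-u))) (C ((m+n-j)+p-k)) := by
                refine Finset.sum_congr rfl fun k hk => ?_
                have hkr : k ≤ m+n-j := by simpa [Nat.lt_succ_iff] using hk
                rw [show (j-u)+k = j+k-u by omega, Gs,
                  show u+(j+k-u) = j+k by omega,
                  if_pos (by omega : j ≤ j + k),
                  show j+k-j = k by omega,
                  show m+n+p-(j+k) = (m+n-j)+p-k by omega]
                congr 1
                have hsgn : (-1:ℂ)^(m+n+j+(j+k-u)) = (-1)^((m+n-j)+k) * (-1)^(j+u) := by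
                  rw [← pow_add]
                  exact neg_one_pow_congr_c (by omega)
                rw [hsgn]
                ring
      _ = ∑ j ∈ range (m+1), ∑ u ∈ range (m+1), ∑ v ∈ range (m+n+1),
            Gs m n u v j • br (br (A u) (B v)) (C (m+n+p-(u+v))) := by
          refine Finset.sum_congr rfl fun j hj => ?_
          have hjm : j ≤ m := by simpa [Nat.lt_succ_iff] using hj
          refine Finset.sum_subset (Finset.range_subset_range.mpr (by omega)) ?_
          intro u _ hu2
          have hju : j < u := by
            have := Finset.mem_range.not.mp hu2
            omega
          refine Finset.sum_eq_zero fun v _ => ?_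
          rw [Gs, Nat.choose_eq_zero_of_lt hju]
          simp
      _ = ∑ u ∈ range (m+1), ∑ v ∈ range (m+n+1), ∑ j ∈ range (m+1),
            Gs m n u v j • br (br (A u) (B v)) (C (m+n+p-(u+v))) := by
          rw [Finset.sum_comm]
          exact Finset.sum_congr rfl fun u _ => Finset.sum_comm
      _ = ∑ u ∈ range (m+1), ∑ v ∈ range (m+n+1),
            ((-1:ℂ)^(m+n+u+v) * (m.choose u : ℂ) * (n.choose v : ℂ)) •
              br (br (A u) (B v)) (C (m+n+p-(u+v))) := by
          refine Finset.sum_congr rfl fun u hu => ?_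
          have hum : u ≤ m := by simpa [Nat.lt_succ_iff] using hu
          refine Finset.sum_congr rfl fun v _ => ?_
          rw [← Finset.sum_smul, binom3 m n u v hum]
      _ = ∑ u ∈ range (m+1), ∑ v ∈ range (n+1),
            (((-1:ℂ)^(m+u) * (m.choose u : ℂ)) * ((-1:ℂ)^(n+v) * (n.choose v : ℂ))) •
              br (br (A u) (B v)) (C (m+n+p-(u+v))) := by
          refine Finset.sum_congr rfl fun u hu => ?_
          have hvan2 : ∀ v ∈ range (m+n+1), v ∉ range (n+1) →
              ((-1:ℂ)^(m+n+u+v) * (m.choose u : ℂ) * (n.choose v : ℂ)) •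
                br (br (A u) (B v)) (C (m+n+p-(u+v))) = 0 := by
            intro v _ hv2
            have : n < v := by
              have := Finset.mem_range.not.mp hv2
              omega
            rw [Nat.choose_eq_zero_of_lt this]
            simp
          rw [← Finset.sum_subset (Finset.range_subset_range.mpr (by omega : n+1 ≤ m+n+1)) hvan2]
          refine Finset.sum_congr rfl fun v _ => ?_
          congr 1
          rw [show m+n+u+v = (m+u)+(n+v) by omega, pow_add]
          ring
  rw [claim2]
  exact eq_add_of_sub_eq hD

end Aux

/-- The general conformal algebra `gc_N`: for a free `ℂ[∂]`-module `M` of rank `N`, the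
conformal endomorphisms of `M`, equipped with `cD` and the products `cmul`, are closed under
these operations and satisfy the conformal algebra axioms (C0)-(C3). -/
theorem gcN_is_conformal_algebra (N : ℕ) (DM : Module.End ℂ M)
    (bv : Fin N → M)
    (hspan : ∀ v : M, v ∈ Submodule.span ℂ {x | ∃ (i : Fin N) (k : ℕ), x = (⇑DM)^[k] (bv i)})
    (hfree : ∀ c : Fin N → Polynomial ℂ,
      (∑ i, Polynomial.aeval DM (c i) (bv i)) = 0 → ∀ i, c i = 0) :
    -- closure under `∂` and the products
    (∀ A, IsConfEnd DM A → IsConfEnd DM (cD A)) ∧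
    (∀ A B, IsConfEnd DM A → IsConfEnd DM B → ∀ m : ℕ, IsConfEnd DM (cmul A B m)) ∧
    -- (C0)
    (∀ A B, IsConfEnd DM A → IsConfEnd DM B → ∃ K : ℕ, ∀ m ≥ K, cmul A B m = 0) ∧
    -- (C1)
    (∀ A B, IsConfEnd DM A → IsConfEnd DM B → ∀ m : ℕ,
      cmul (cD A) B m = fun n => -(m : ℂ) • cmul A B (m - 1) n) ∧
    -- (C2)
    (∀ A B, IsConfEnd DM A → IsConfEnd DM B → ∀ (n K : ℕ),
      (∀ j ≥ K, cmul B A (n + j) = 0) →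
      cmul A B n = fun p => ∑ j ∈ range K,
        (((-1 : ℂ) ^ (j + n + 1) * ((j.factorial : ℂ))⁻¹)) • (cD^[j] (cmul B A (n + j))) p) ∧
    -- (C3)
    (∀ A B C, IsConfEnd DM A → IsConfEnd DM B → IsConfEnd DM C → ∀ m n : ℕ,
      cmul A (cmul B C n) m = fun p => (∑ j ∈ range (m + 1), (m.choose j : ℂ) •
        cmul (cmul A B j) C (m + n - j) p) + cmul B (cmul A C m) n p) := by
  refine ⟨fun A hA => part1 DM A hA,
    fun A B hA hB m => part2 DM A B hA hB m,
    fun A B hA hB => part3 DM bv hspan A B hA hB,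
    fun A B hA hB m => part4 A B m,
    fun A B hA hB n K h => part5 A B n K h,
    fun A B C hA hB hC m n => part6 A B C m n⟩
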